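/- Let Ω ⊂ ℝ^{n+1} be δ-Reifenberg flat (in the parabolic sense). Then for every (X,t) ∈ Ω, every point (P,η) ∈ ∂Ω realizing the parabolic distance from (X,t) to ∂Ω satisfies η = t; that is, every closest boundary point to (X,t) lies in the same time slice. -/

import Mathlib

open MeasureTheory Real Set Filter Topology
open scoped ENNReal NNReal BigOperators

noncomputable section

abbrev Pt (n : ℕ) := EuclideanSpace ℝ (Fin n) × ℝ

/-- Real inner product on `ℝ^n`. -/
def ip {n : ℕ} (x y : EuclideanSpace ℝ (Fin n)) : ℝ := inner ℝ x y

/-- Parabolic distance between points of `ℝ^n × ℝ`. -/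
def pdist {n : ℕ} (p q : Pt n) : ℝ := dist p.1 q.1 + Real.sqrt |p.2 - q.2|

/-- The parabolic cylinder of radius `R` centered at `c`. -/
def pcyl {n : ℕ} (c : Pt n) (R : ℝ) : Set (Pt n) :=
  {p | dist p.1 c.1 < R ∧ |p.2 - c.2| < R ^ 2}

/-- `Ω` is `δ`-Reifenberg flat in the parabolic sense: at every boundary point and every
scale there is an `n`-plane containing the time direction (encoded by its spatial unit
normal `ν`) such that the part of the cylinder lying at distance more than `δR` on the
`ν`-side of the plane is in `Ω`, and the part lying at distance more than `δR` on the
other side is in the complement of the closure of `Ω`. -/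
def ReifenbergFlat {n : ℕ} (Ω : Set (Pt n)) (δ : ℝ) : Prop :=
  ∀ Q ∈ frontier Ω, ∀ R : ℝ, 0 < R →
    ∃ ν : EuclideanSpace ℝ (Fin n), ‖ν‖ = 1 ∧
      (∀ p ∈ pcyl Q R, δ * R < ip (p.1 - Q.1) ν → p ∈ Ω) ∧
      (∀ p ∈ pcyl Q R, ip (p.1 - Q.1) ν < -(δ * R) → p ∉ closure Ω)

/-- in a `δ`-Reifenberg flat parabolic domain (`δ` small), every closest
boundary point to an interior point lies in the same time slice. -/
theorem statement1 (n : ℕ) (Ω : Set (Pt n)) (δ : ℝ) (hδ0 : 0 < δ) (hδ : δ < 1 / 2)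
    (hRF : ReifenbergFlat Ω δ) :
    ∀ p ∈ Ω, ∀ q ∈ frontier Ω,
      (∀ q' ∈ frontier Ω, pdist p q ≤ pdist p q') → q.2 = p.2 := by
  intro p hp q hq hmin
  by_contra hne
  set d : ℝ := |p.2 - q.2| with hd_def
  have hd0 : 0 < d := by
    rw [hd_def, abs_pos]
    intro h
    exact hne (by linarith [sub_eq_zero.mp h])
  set R : ℝ := Real.sqrt (2 * d) with hR_def
  have hR0 : 0 < R := Real.sqrt_pos.mpr (by linarith)
  have hR2 : R ^ 2 = 2 * d := Real.sq_sqrt (by linarith)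
  obtain ⟨ν, hν, hpos, hneg⟩ := hRF q hq R hR0
  set r : ℝ := (2 / 3) * R with hr_def
  have hr0 : 0 < r := by positivity
  have hrR : r < R := by rw [hr_def]; nlinarith
  have hδr : δ * R < r := by rw [hr_def]; nlinarith
  -- the spatial segment through q at time p.2
  set g : ℝ → Pt n := fun s => (q.1 + s • ν, p.2) with hg_def
  have hg : Continuous g := by
    apply Continuous.prodMk
    · exact continuous_const.add (continuous_id.smul continuous_const)
    · exact continuous_const
  have hgdist : ∀ s : ℝ, dist (g s).1 q.1 = |s| := by
    intro s
    simp only [hg_def]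
    rw [dist_eq_norm, add_sub_cancel_left, norm_smul, hν, Real.norm_eq_abs, mul_one]
  have hgcyl : ∀ s : ℝ, |s| ≤ r → g s ∈ pcyl q R := by
    intro s hs
    refine ⟨by rw [hgdist]; linarith, ?_⟩
    show |p.2 - q.2| < R ^ 2
    rw [hR2, ← hd_def]; linarith
  have hgip : ∀ s : ℝ, ip ((g s).1 - q.1) ν = s := by
    intro s
    simp only [hg_def, ip, add_sub_cancel_left]
    rw [real_inner_smul_left, real_inner_self_eq_norm_sq, hν]
    ring
  have ha : g r ∈ Ω := by
    apply hpos (g r) (hgcyl r (by rw [abs_of_pos hr0]))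
    rw [hgip]; exact hδr
  have hb : g (-r) ∉ closure Ω := by
    apply hneg (g (-r)) (hgcyl (-r) (by rw [abs_neg, abs_of_pos hr0]))
    rw [hgip]; linarith
  -- find a frontier crossing on the segment
  set T : Set ℝ := {s | g s ∈ closure Ω} with hT_def
  have hT : IsClosed T := isClosed_closure.preimage hg
  set S : Set ℝ := T ∩ Ici (-r) with hS_def
  have hrS : r ∈ S := ⟨subset_closure ha, by simp; linarith⟩
  have hSne : S.Nonempty := ⟨r, hrS⟩
  have hSbdd : BddBelow S := ⟨-r, fun x hx => hx.2⟩
  set s₀ : ℝ := sInf S with hs₀_def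
  have hs₀S : s₀ ∈ S := (hT.inter isClosed_Ici).csInf_mem hSne hSbdd
  have hs₀r : s₀ ≤ r := csInf_le hSbdd hrS
  have hs₀l : -r < s₀ := by
    rcases lt_or_eq_of_le (mem_Ici.mp hs₀S.2) with h | h
    · exact h
    · exact absurd hs₀S.1 (by rw [← h]; exact hb)
  -- g s₀ is a frontier point of closure Ω, hence of Ω
  have hx1 : g s₀ ∈ closure Ω := hs₀S.1
  have hx2 : g s₀ ∈ closure ((closure Ω)ᶜ) := by
    have hne' : (𝓝[Ioo (-r) s₀] s₀).NeBot := right_nhdsWithin_Ioo_neBot hs₀l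
    refine mem_closure_of_tendsto
      (hg.continuousAt.continuousWithinAt : Tendsto g (𝓝[Ioo (-r) s₀] s₀) (𝓝 (g s₀))) ?_
    filter_upwards [self_mem_nhdsWithin] with s hs
    intro hmem
    have hsS : s ∉ S := fun hsS => absurd (csInf_le hSbdd hsS) (not_le.mpr hs.2)
    exact hsS ⟨hmem, le_of_lt hs.1⟩
  have hxf : g s₀ ∈ frontier Ω := by
    apply frontier_closure_subset
    rw [frontier_eq_closure_inter_closure, closure_closure]
    exact ⟨hx1, hx2⟩
  -- compare distances
  have hle := hmin (g s₀) hxf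
  have hpd1 : pdist p q = dist p.1 q.1 + Real.sqrt d := rfl
  have hpd2 : pdist p (g s₀) = dist p.1 (g s₀).1 := by
    simp [pdist, hg_def, Real.sqrt_eq_zero']
  have htri : dist p.1 (g s₀).1 ≤ dist p.1 q.1 + r := by
    calc dist p.1 (g s₀).1 ≤ dist p.1 q.1 + dist q.1 (g s₀).1 := dist_triangle _ _ _
    _ ≤ dist p.1 q.1 + r := by
        rw [dist_comm q.1, hgdist]
        have : |s₀| ≤ r := abs_le.mpr ⟨le_of_lt hs₀l, hs₀r⟩
        linarith
  have hkey : Real.sqrt d ≤ r := by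
    rw [hpd1, hpd2] at hle
    linarith
  -- derive the contradiction: √d ≤ (2/3)√(2d) < √d
  have hsplit : R = Real.sqrt 2 * Real.sqrt d := by
    rw [hR_def, Real.sqrt_mul (by norm_num) d]
  have hsd : 0 < Real.sqrt d := Real.sqrt_pos.mpr hd0
  have h2 : Real.sqrt 2 ^ 2 = 2 := Real.sq_sqrt (by norm_num)
  have h2n : 0 ≤ Real.sqrt 2 := Real.sqrt_nonneg 2
  rw [hr_def, hsplit] at hkey
  nlinarith [hkey, hsd, h2, h2n]
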